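/- arXiv:1603.04594 — 3 statements merged into one kernel-verified Lean document; each statement's English description precedes it below -/
import Mathlib

section
/- Factors of leading terms are mutually ⊏-incomparable: let n ∈ ℤ and let (i₁,j₁), …, (i_t,j_t), (i_{t+1},j_{t+1}), …, (i_s,j_s) be colors with i₁ ≤ … ≤ i_t ≤ j_t ≤ … ≤ j₁ ≤ i_{t+1} ≤ … ≤ i_s ≤ j_s ≤ … ≤ j_{t+1} and (i_p,j_p) ≠ (i_{p+1},j_{p+1}) for all p. Then the variables x_{i_p j_p}(−n−1) for 1 ≤ p ≤ t together with the variables x_{i_p j_p}(−n) for t+1 ≤ p ≤ s are pairwise ⊏-incomparable. -/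
/-- A color `(i,j)`; the colors of `Γ` satisfy `1 ≤ i ≤ j ≤ ℓ`. -/
abbrev Color : Type := ℤ × ℤ

/-- A variable: the pair `((i,j), n)` represents the variable `x_{ij}(−n)`
with color `(i,j)` and degree `−n`. -/
abbrev Var : Type := Color × ℤ

/-- Membership of a color in the set of colors `Γ = {(i,j) : 1 ≤ i ≤ j ≤ ℓ}`. -/
def inGamma (ℓ : ℕ) (c : Color) : Prop := 1 ≤ c.1 ∧ c.1 ≤ c.2 ∧ c.2 ≤ (ℓ : ℤ)

/-- Membership of a variable in the set of variables `Γ̃ = Γ × ℤ`. -/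
def inVars (ℓ : ℕ) (v : Var) : Prop := inGamma ℓ v.1

/-- The relation `⊏` on variables: `x_{ij}(−n) ⊏ x_{i'j'}(−n')` iff
`n ≥ n' + 2`, or (`n = n' + 1` and `j > i'`), or
(`n = n'` and `i > i'` and `j > j'`). -/
def sqsub (x y : Var) : Prop :=
  y.2 + 2 ≤ x.2 ∨ (x.2 = y.2 + 1 ∧ y.1.1 < x.1.2) ∨
    (x.2 = y.2 ∧ y.1.1 < x.1.1 ∧ y.1.2 < x.1.2)

/-- A diagonal path of colors: a list `(i₁,j₁), …, (i_t,j_t)` of colors of `Γ`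
with `i₁ ≤ … ≤ i_t ≤ j_t ≤ … ≤ j₁` and consecutive colors distinct. -/
def DiagPath (ℓ : ℕ) (L : List Color) : Prop :=
  (∀ c ∈ L, inGamma ℓ c) ∧
    L.Chain' (fun a b => a.1 ≤ b.1 ∧ b.2 ≤ a.2 ∧ a ≠ b)

/-- A monomial `π` (a finite multiset of variables) satisfies the level-`k`
difference conditions (DC) if for every `n ∈ ℤ` and every pair of diagonal
paths `L₁ = (i₁,j₁), …, (i_t,j_t)` and `L₂ = (i_{t+1},j_{t+1}), …, (i_s,j_s)`
with `j₁ ≤ i_{t+1}` and `(i_t,j_t) ≠ (i_{t+1},j_{t+1})`, the total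
multiplicity in `π` of the variables `x_{i_p j_p}(−n−1)` for `1 ≤ p ≤ t`
together with the variables `x_{i_p j_p}(−n)` for `t+1 ≤ p ≤ s` is at
most `k`. -/
def DC (ℓ : ℕ) (k : ℕ) (π : Multiset Var) : Prop :=
  ∀ (n : ℤ) (L₁ L₂ : List Color),
    DiagPath ℓ L₁ → DiagPath ℓ L₂ →
    (∀ c₁ ∈ L₁.head?, ∀ c₂ ∈ L₂.head?, c₁.2 ≤ c₂.1) →
    (∀ c₁ ∈ L₁.getLast?, ∀ c₂ ∈ L₂.head?, c₁ ≠ c₂) →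
    (L₁.map (fun c => π.count (c, n + 1))).sum +
      (L₂.map (fun c => π.count (c, n))).sum ≤ k

/-- A monomial `π` satisfies the initial conditions (IC) for the dominant
weight `Λ = k₀Λ₀ + ⋯ + k_ℓΛ_ℓ` (encoded by `kc : ℕ → ℕ`, `kc r = k_r`) if for
every diagonal path `(i₁,j₁), …, (i_t,j_t)` the total multiplicity in `π` of
the variables `x_{i_p j_p}(−1)`, `1 ≤ p ≤ t`, is at most
`k₀ + k₁ + ⋯ + k_{j₁−1}`. -/
def IC (ℓ : ℕ) (kc : ℕ → ℕ) (π : Multiset Var) : Prop :=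
  ∀ L : List Color, DiagPath ℓ L →
    ∀ c ∈ L.head?,
      (L.map (fun c' => π.count (c', 1))).sum ≤ ∑ r ∈ Finset.range c.2.toNat, kc r

/-- Factors of leading terms are mutually `⊏`-incomparable: given diagonal
paths `L₁ = (i₁,j₁), …, (i_t,j_t)` and `L₂ = (i_{t+1},j_{t+1}), …, (i_s,j_s)`
with `j₁ ≤ i_{t+1}` and `(i_t,j_t) ≠ (i_{t+1},j_{t+1})`, the variables
`x_{i_p j_p}(−n−1)` for `1 ≤ p ≤ t` together with the variables
`x_{i_p j_p}(−n)` for `t+1 ≤ p ≤ s` are pairwise `⊏`-incomparable. -/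
theorem stmt10 (ℓ : ℕ) (n : ℤ) (L₁ L₂ : List Color)
    (h1 : DiagPath ℓ L₁) (h2 : DiagPath ℓ L₂)
    (hj : ∀ c₁ ∈ L₁.head?, ∀ c₂ ∈ L₂.head?, c₁.2 ≤ c₂.1)
    (hd : ∀ c₁ ∈ L₁.getLast?, ∀ c₂ ∈ L₂.head?, c₁ ≠ c₂) :
    (L₁.map (fun c => ((c, n + 1) : Var)) ++
      L₂.map (fun c => ((c, n) : Var))).Pairwise
        (fun x y => ¬ sqsub x y ∧ ¬ sqsub y x) := by
  haveI : IsTrans Color (fun a b : Color => a.1 ≤ b.1 ∧ b.2 ≤ a.2) :=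
    ⟨fun a b c hab hbc => ⟨hab.1.trans hbc.1, hbc.2.trans hab.2⟩⟩
  have t1 : L₁.Pairwise (fun a b : Color => a.1 ≤ b.1 ∧ b.2 ≤ a.2) :=
    List.isChain_iff_pairwise.mp (h1.2.imp fun {a b} h => ⟨h.1, h.2.1⟩)
  have t2 : L₂.Pairwise (fun a b : Color => a.1 ≤ b.1 ∧ b.2 ≤ a.2) :=
    List.isChain_iff_pairwise.mp (h2.2.imp fun {a b} h => ⟨h.1, h.2.1⟩)
  rw [List.pairwise_append]
  refine ⟨?_, ?_, ?_⟩
  · rw [List.pairwise_map]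
    refine t1.imp ?_
    rintro ⟨a1, a2⟩ ⟨b1, b2⟩ ⟨h1', h2'⟩
    simp only [sqsub]
    constructor <;> rintro (h | h | h) <;> omega
  · rw [List.pairwise_map]
    refine t2.imp ?_
    rintro ⟨a1, a2⟩ ⟨b1, b2⟩ ⟨h1', h2'⟩
    simp only [sqsub]
    constructor <;> rintro (h | h | h) <;> omega
  · intro x hx y hy
    simp only [List.mem_map] at hx hy
    obtain ⟨c1, hc1, rfl⟩ := hx
    obtain ⟨c2, hc2, rfl⟩ := hy
    -- key: c1.2 ≤ c2.1
    have key : c1.2 ≤ c2.1 := by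
      cases L₁ with
      | nil => simp at hc1
      | cons a l1 =>
        cases L₂ with
        | nil => simp at hc2
        | cons b l2 =>
          have hab : a.2 ≤ b.1 := hj a rfl b rfl
          have h1c : c1.2 ≤ a.2 := by
            rcases List.mem_cons.mp hc1 with rfl | hm
            · exact le_refl _
            · exact ((List.pairwise_cons.mp t1).1 _ hm).2
          have h2c : b.1 ≤ c2.1 := by
            rcases List.mem_cons.mp hc2 with rfl | hm
            · exact le_refl _
            · exact ((List.pairwise_cons.mp t2).1 _ hm).1
          omega
    obtain ⟨c11, c12⟩ := c1
    obtain ⟨c21, c22⟩ := c2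
    simp only [sqsub] at key ⊢
    constructor <;> rintro (h | h | h) <;> omega
end

section
/- For every integer k ≥ 1, a monomial π satisfies level-k difference conditions if and only if there exist monomials π⁽¹⁾, …, π⁽ᵏ⁾ with π = π⁽¹⁾ + ⋯ + π⁽ᵏ⁾ (multiset sum) such that each π⁽ʲ⁾ satisfies level-1 difference conditions. -/
def R (ℓ : ℕ) (v w : Var) : Prop :=
  w.2 + 2 ≤ v.2 ∨
    (v.2 = w.2 + 1 ∧ (w.1.1 < v.1.2 ∨ (v.1.1 = (ℓ:ℤ) ∧ v.1.2 = (ℓ:ℤ) ∧ w.1.1 = (ℓ:ℤ) ∧ w.1.2 = (ℓ:ℤ)))) ∨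
    (v.2 = w.2 ∧ w.1.1 < v.1.1 ∧ w.1.2 < v.1.2)

def P : Color → Color → Prop := fun a b => a.1 ≤ b.1 ∧ b.2 ≤ a.2 ∧ a ≠ b

instance : IsTrans Color P := ⟨by
  rintro a b c ⟨h1, h2, h3⟩ ⟨h4, h5, h6⟩
  refine ⟨le_trans h1 h4, le_trans h5 h2, fun hac => ?_⟩
  apply h3
  have e1 : a.1 = b.1 := le_antisymm h1 (hac ▸ h4)
  have e2 : b.2 = a.2 := le_antisymm h2 (by rw [hac]; exact h5)
  exact Prod.ext e1 e2.symm⟩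

lemma pairwise_rel_getLast {α : Type*} {Q : α → α → Prop} :
    ∀ {l : List α}, l.Pairwise Q → (hne : l ≠ []) → ∀ x ∈ l,
      x = l.getLast hne ∨ Q x (l.getLast hne) := by
  intro l
  induction l with
  | nil => intro _ h; exact absurd rfl h
  | cons a t ih =>
    intro hp hne x hx
    rcases List.eq_nil_or_concat t with rfl | ⟨s, y, rfl⟩
    · simp at hx ⊢; exact Or.inl hx
    · have htne : (s.concat y) ≠ [] := by simp
      have hgl : (a :: (s.concat y)).getLast hne = (s.concat y).getLast htne :=
        List.getLast_cons htne
      rw [List.pairwise_cons] at hp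
      rcases List.mem_cons.mp hx with rfl | hxt
      · right; rw [hgl]; exact hp.1 _ (List.getLast_mem htne)
      · rw [hgl]; exact ih hp.2 htne x hxt

lemma sum_le_one_of_pairwise (l : List ℕ) (h1 : ∀ x ∈ l, x ≤ 1)
    (h2 : l.Pairwise (fun a b => a = 0 ∨ b = 0)) : l.sum ≤ 1 := by
  induction l with
  | nil => simp
  | cons a t ih =>
    rw [List.pairwise_cons] at h2
    rcases Nat.eq_zero_or_pos a with rfl | ha
    · simpa using ih (fun x hx => h1 x (List.mem_cons_of_mem _ hx)) h2.2
    · have ht : t.sum = 0 := List.sum_eq_zero (fun x hx => ((h2.1 x hx).resolve_left (by omega)))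
      have := h1 a (List.mem_cons_self)
      simp [ht]; omega

lemma chain_DC1 (ℓ : ℕ) (σ : Multiset Var) (hcount : ∀ v, σ.count v ≤ 1)
    (hchain : ∀ v ∈ σ, ∀ w ∈ σ, v ≠ w → R ℓ v w ∨ R ℓ w v) : DC ℓ 1 σ := by
  intro n L₁ L₂ hd₁ hd₂ hhead hlast
  have hp₁ : L₁.Pairwise P := List.isChain_iff_pairwise.mp hd₁.2
  have hp₂ : L₂.Pairwise P := List.isChain_iff_pairwise.mp hd₂.2
  set W : List Var := L₁.map (fun c => (c, n + 1)) ++ L₂.map (fun c => (c, n)) with hW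
  have hsum : (L₁.map (fun c => σ.count (c, n + 1))).sum +
      (L₂.map (fun c => σ.count (c, n))).sum = (W.map σ.count).sum := by
    simp only [hW, List.map_append, List.map_map, List.sum_append, Function.comp_def]
  rw [hsum]
  apply sum_le_one_of_pairwise
  · intro x hx
    rcases List.mem_map.mp hx with ⟨v, _, rfl⟩
    exact hcount v
  · rw [List.pairwise_map, hW]
    apply List.pairwise_append.mpr
    refine ⟨?_, ?_, ?_⟩
    · rw [List.pairwise_map]
      refine hp₁.imp_of_mem ?_
      intro a b ha hb hab
      obtain ⟨hab1, hab2, hab3⟩ := hab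
      by_contra hcon
      push_neg at hcon
      have hva : (a, n+1) ∈ σ := Multiset.count_pos.mp (by omega)
      have hvb : (b, n+1) ∈ σ := Multiset.count_pos.mp (by omega)
      have hne : ((a, n+1) : Var) ≠ (b, n+1) := by
        simp only [ne_eq, Prod.mk.injEq]
        rintro ⟨h1, -⟩
        exact hab3 h1
      rcases hchain _ hva _ hvb hne with h | h <;>
        (unfold R at h; simp only at h; omega)
    · rw [List.pairwise_map]
      refine hp₂.imp_of_mem ?_
      intro a b ha hb hab
      obtain ⟨hab1, hab2, hab3⟩ := hab
      by_contra hcon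
      push_neg at hcon
      have hva : (a, n) ∈ σ := Multiset.count_pos.mp (by omega)
      have hvb : (b, n) ∈ σ := Multiset.count_pos.mp (by omega)
      have hne : ((a, n) : Var) ≠ (b, n) := by
        simp only [ne_eq, Prod.mk.injEq]
        rintro ⟨h1, -⟩
        exact hab3 h1
      rcases hchain _ hva _ hvb hne with h | h <;>
        (unfold R at h; simp only at h; omega)
    · intro v hv w hw
      rcases List.mem_map.mp hv with ⟨c, hc, rfl⟩
      rcases List.mem_map.mp hw with ⟨d, hd, rfl⟩
      by_contra hcon
      push_neg at hcon
      have hvc : (c, n+1) ∈ σ := Multiset.count_pos.mp (by omega)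
      have hvd : (d, n) ∈ σ := Multiset.count_pos.mp (by omega)
      have hne : ((c, n+1) : Var) ≠ (d, n) := by
        simp only [ne_eq, Prod.mk.injEq]; omega
      have hL₁ne : L₁ ≠ [] := List.ne_nil_of_mem hc
      have hL₂ne : L₂ ≠ [] := List.ne_nil_of_mem hd
      obtain ⟨h₁, t₁, he₁⟩ := List.exists_cons_of_ne_nil hL₁ne
      obtain ⟨h₂, t₂, he₂⟩ := List.exists_cons_of_ne_nil hL₂ne
      have hh : h₁.2 ≤ h₂.1 := hhead h₁ (by rw [he₁]; rfl) h₂ (by rw [he₂]; rfl)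
      have hch : c.2 ≤ h₁.2 := by
        rw [he₁] at hc hp₁
        rcases List.mem_cons.mp hc with rfl | hct
        · exact le_refl _
        · exact ((List.pairwise_cons.mp hp₁).1 c hct).2.1
      have hdh : h₂.1 ≤ d.1 := by
        rw [he₂] at hd hp₂
        rcases List.mem_cons.mp hd with rfl | hdt
        · exact le_refl _
        · exact ((List.pairwise_cons.mp hp₂).1 d hdt).1
      have hcd : c.2 ≤ d.1 := le_trans hch (le_trans hh hdh)
      rcases hchain _ hvc _ hvd hne with h | h
      · unfold R at h; simp only at h
        have hexc : c.1 = (ℓ:ℤ) ∧ c.2 = (ℓ:ℤ) ∧ d.1 = (ℓ:ℤ) ∧ d.2 = (ℓ:ℤ) := by omega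
        have hγc := hd₁.1 c hc
        have hγd := hd₂.1 d hd
        have hγh₁ := hd₁.1 h₁ (by rw [he₁]; exact List.mem_cons_self)
        have hγh₂ := hd₂.1 h₂ (by rw [he₂]; exact List.mem_cons_self)
        unfold inGamma at hγc hγd hγh₁ hγh₂
        have hh₁2 : h₁.2 = (ℓ:ℤ) := by omega
        have hh₂e : h₂.1 = (ℓ:ℤ) ∧ h₂.2 = (ℓ:ℤ) := by omega
        set g := L₁.getLast hL₁ne with hg
        have hγg := hd₁.1 g (List.getLast_mem hL₁ne)
        unfold inGamma at hγg
        have hcg := pairwise_rel_getLast hp₁ hL₁ne c hc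
        rw [← hg] at hcg
        have hge : g.1 = (ℓ:ℤ) ∧ g.2 = (ℓ:ℤ) := by
          rcases hcg with hcg | hcg
          · rw [hcg] at hexc; exact ⟨hexc.1, hexc.2.1⟩
          · obtain ⟨h1, -, -⟩ := hcg
            constructor <;> omega
        have : g ≠ h₂ := hlast g (by rw [List.getLast?_eq_getLast hL₁ne]; rfl)
          h₂ (by rw [he₂]; rfl)
        exact this (Prod.ext (by omega) (by omega))
      · unfold R at h; simp only at h; omega

def rkey : Color → Color → Prop := fun a b => a.1 < b.1 ∨ (a.1 = b.1 ∧ b.2 ≤ a.2)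

instance : DecidableRel rkey := fun a b => by unfold rkey; infer_instance
instance : IsTrans Color rkey := ⟨by rintro a b c h1 h2; unfold rkey at *; omega⟩
instance : IsAntisymm Color rkey := ⟨by
  rintro a b h1 h2; unfold rkey at *; exact Prod.ext (by omega) (by omega)⟩
instance : IsTotal Color rkey := ⟨by intro a b; unfold rkey; omega⟩

lemma not_R_same (ℓ : ℕ) (c d : Color) (n : ℤ)
    (h1 : ¬ R ℓ (c, n) (d, n)) (h2 : ¬ R ℓ (d, n) (c, n)) :
    (c.1 ≤ d.1 ∧ d.2 ≤ c.2) ∨ (d.1 ≤ c.1 ∧ c.2 ≤ d.2) := by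
  rcases lt_trichotomy c.1 d.1 with hlt | heq | hgt
  · left
    refine ⟨le_of_lt hlt, ?_⟩
    by_contra hcc
    exact h2 (Or.inr (Or.inr ⟨rfl, show c.1 < d.1 from hlt, show c.2 < d.2 by omega⟩))
  · rcases le_total c.2 d.2 with hle | hle
    · right; exact ⟨le_of_eq heq.symm, hle⟩
    · left; exact ⟨le_of_eq heq, hle⟩
  · right
    refine ⟨le_of_lt hgt, ?_⟩
    by_contra hcc
    exact h1 (Or.inr (Or.inr ⟨rfl, show d.1 < c.1 from hgt, show d.2 < c.2 by omega⟩))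

lemma not_R_cross (ℓ : ℕ) (c d : Color) (n : ℤ)
    (h1 : ¬ R ℓ (c, n + 1) (d, n)) :
    c.2 ≤ d.1 ∧ ¬(c.1 = (ℓ:ℤ) ∧ c.2 = (ℓ:ℤ) ∧ d.1 = (ℓ:ℤ) ∧ d.2 = (ℓ:ℤ)) := by
  constructor
  · by_contra hcc
    exact h1 (Or.inr (Or.inl ⟨rfl, Or.inl (show d.1 < c.2 by omega)⟩))
  · rintro ⟨e1, e2, e3, e4⟩
    exact h1 (Or.inr (Or.inl ⟨rfl, Or.inr ⟨e1, e2, e3, e4⟩⟩))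

lemma nested_diagpath (ℓ : ℕ) (S : Finset Color)
    (hγ : ∀ c ∈ S, inGamma ℓ c)
    (hnest : ∀ c ∈ S, ∀ d ∈ S, c ≠ d → (c.1 ≤ d.1 ∧ d.2 ≤ c.2) ∨ (d.1 ≤ c.1 ∧ c.2 ≤ d.2)) :
    DiagPath ℓ (S.sort rkey) := by
  constructor
  · intro c hc; exact hγ c ((Finset.mem_sort rkey).mp hc)
  · apply List.Pairwise.isChain
    have hs : (S.sort rkey).Pairwise rkey := S.pairwise_sort rkey
    have hn : (S.sort rkey).Pairwise (· ≠ ·) := S.sort_nodup rkey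
    have hsn := hs.and hn
    refine hsn.imp_of_mem ?_
    intro a b ha hb hab
    obtain ⟨hr, hne⟩ := hab
    have ha' : a ∈ S := (Finset.mem_sort rkey).mp ha
    have hb' : b ∈ S := (Finset.mem_sort rkey).mp hb
    have h := hnest a ha' b hb' hne
    refine ⟨?_, ?_, hne⟩
    · unfold rkey at hr; omega
    · unfold rkey at hr
      rcases h with h | h
      · exact h.2
      · have : a.1 = b.1 := by omega
        rcases hr with hr | hr
        · omega
        · exact hr.2

lemma antichain_card_le (ℓ k : ℕ) (π : Multiset Var) (hDC : DC ℓ k π)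
    (hπ : ∀ v ∈ π, inVars ℓ v)
    (V : Multiset Var) (hV : V ≤ π)
    (hanti : ∀ v ∈ V, ∀ w ∈ V, v ≠ w → ¬ R ℓ v w ∧ ¬ R ℓ w v) :
    Multiset.card V ≤ k := by
  classical
  rcases eq_or_ne V 0 with rfl | hVne
  · simp
  have hD : (V.toFinset.image Prod.snd).Nonempty :=
    (Multiset.toFinset_nonempty.mpr hVne).image _
  set n := (V.toFinset.image Prod.snd).min' hD with hn
  obtain ⟨v₀, hv₀, hv₀2⟩ : ∃ v₀ ∈ V, v₀.2 = n := by
    have := (V.toFinset.image Prod.snd).min'_mem hD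
    rw [← hn] at this
    rcases Finset.mem_image.mp this with ⟨v, hv, hv2⟩
    exact ⟨v, Multiset.mem_toFinset.mp hv, hv2⟩
  have hdeg : ∀ v ∈ V, v.2 = n ∨ v.2 = n + 1 := by
    intro v hv
    have h1 : n ≤ v.2 := Finset.min'_le _ _ (Finset.mem_image_of_mem _ (Multiset.mem_toFinset.mpr hv))
    by_contra hcc
    push_neg at hcc
    have hgt : n + 2 ≤ v.2 := by omega
    have hne : v ≠ v₀ := fun h => by rw [h, hv₀2] at hgt; omega
    exact (hanti v hv v₀ hv₀ hne).1 (Or.inl (by omega))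
  set S₁ := (V.toFinset.filter (fun v => v.2 = n + 1)).image Prod.fst with hS₁
  set S₂ := (V.toFinset.filter (fun v => v.2 = n)).image Prod.fst with hS₂
  have hmem₁ : ∀ c, c ∈ S₁ ↔ ((c, n + 1) : Var) ∈ V := by
    intro c
    simp only [hS₁, Finset.mem_image, Finset.mem_filter, Multiset.mem_toFinset]
    constructor
    · rintro ⟨v, ⟨hv, hv2⟩, hv1⟩
      have : v = (c, n + 1) := Prod.ext hv1 hv2
      rwa [← this]
    · intro h; exact ⟨(c, n + 1), ⟨h, rfl⟩, rfl⟩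
  have hmem₂ : ∀ c, c ∈ S₂ ↔ ((c, n) : Var) ∈ V := by
    intro c
    simp only [hS₂, Finset.mem_image, Finset.mem_filter, Multiset.mem_toFinset]
    constructor
    · rintro ⟨v, ⟨hv, hv2⟩, hv1⟩
      have : v = (c, n) := Prod.ext hv1 hv2
      rwa [← this]
    · intro h; exact ⟨(c, n), ⟨h, rfl⟩, rfl⟩
  have hγ : ∀ v ∈ V, inGamma ℓ v.1 := fun v hv => hπ v (Multiset.mem_of_le hV hv)
  have hγ₁ : ∀ c ∈ S₁, inGamma ℓ c := fun c hc => hγ _ ((hmem₁ c).mp hc)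
  have hγ₂ : ∀ c ∈ S₂, inGamma ℓ c := fun c hc => hγ _ ((hmem₂ c).mp hc)
  have hnest₁ : ∀ c ∈ S₁, ∀ d ∈ S₁, c ≠ d →
      (c.1 ≤ d.1 ∧ d.2 ≤ c.2) ∨ (d.1 ≤ c.1 ∧ c.2 ≤ d.2) := by
    intro c hc d hd hne
    have h := hanti _ ((hmem₁ c).mp hc) _ ((hmem₁ d).mp hd)
      (by simp only [ne_eq, Prod.mk.injEq]; exact fun h => hne h.1)
    exact not_R_same ℓ c d (n+1) h.1 h.2
  have hnest₂ : ∀ c ∈ S₂, ∀ d ∈ S₂, c ≠ d →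
      (c.1 ≤ d.1 ∧ d.2 ≤ c.2) ∨ (d.1 ≤ c.1 ∧ c.2 ≤ d.2) := by
    intro c hc d hd hne
    have h := hanti _ ((hmem₂ c).mp hc) _ ((hmem₂ d).mp hd)
      (by simp only [ne_eq, Prod.mk.injEq]; exact fun h => hne h.1)
    exact not_R_same ℓ c d n h.1 h.2
  have hcross : ∀ c ∈ S₁, ∀ d ∈ S₂,
      c.2 ≤ d.1 ∧ ¬(c.1 = (ℓ:ℤ) ∧ c.2 = (ℓ:ℤ) ∧ d.1 = (ℓ:ℤ) ∧ d.2 = (ℓ:ℤ)) := by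
    intro c hc d hd
    have h := hanti _ ((hmem₁ c).mp hc) _ ((hmem₂ d).mp hd)
      (by simp only [ne_eq, Prod.mk.injEq]; omega)
    exact not_R_cross ℓ c d n h.1
  set L₁ := S₁.sort rkey with hL₁
  set L₂p := S₂.sort rkey with hL₂p
  have hd₁ : DiagPath ℓ L₁ := nested_diagpath ℓ S₁ hγ₁ hnest₁
  have hd₂p : DiagPath ℓ L₂p := nested_diagpath ℓ S₂ hγ₂ hnest₂
  -- sums over sorted lists = Finset sums
  have hsum₁ : (L₁.map (fun c => π.count (c, n + 1))).sum = ∑ c ∈ S₁, π.count (c, n + 1) := by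
    rw [Finset.sum_eq_multiset_sum, ← Finset.sort_eq S₁ rkey, ← hL₁, Multiset.map_coe,
      Multiset.sum_coe]
  have hsum₂ : (L₂p.map (fun c => π.count (c, n))).sum = ∑ c ∈ S₂, π.count (c, n) := by
    rw [Finset.sum_eq_multiset_sum, ← Finset.sort_eq S₂ rkey, ← hL₂p, Multiset.map_coe,
      Multiset.sum_coe]
  -- card V bound by the two Finset sums
  have hcard : Multiset.card V ≤ (∑ c ∈ S₁, π.count (c, n + 1)) + ∑ c ∈ S₂, π.count (c, n) := by
    have e1 : Multiset.card V = ∑ v ∈ V.toFinset, V.count v :=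
      (Multiset.toFinset_sum_count_eq V).symm
    have e2 : ∑ v ∈ V.toFinset, V.count v ≤ ∑ v ∈ V.toFinset, π.count v :=
      Finset.sum_le_sum (fun v _ => Multiset.le_iff_count.mp hV v)
    have e3 : ∑ v ∈ V.toFinset, π.count v =
        (∑ v ∈ V.toFinset.filter (fun v => v.2 = n + 1), π.count v) +
          ∑ v ∈ V.toFinset.filter (fun v => ¬ v.2 = n + 1), π.count v :=
      (Finset.sum_filter_add_sum_filter_not _ _ _).symm
    have e4 : V.toFinset.filter (fun v => ¬ v.2 = n + 1) = V.toFinset.filter (fun v => v.2 = n) := by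
      apply Finset.filter_congr
      intro v hv
      have := hdeg v (Multiset.mem_toFinset.mp hv)
      constructor <;> intro h <;> simp_all <;> omega
    have e5 : ∑ c ∈ S₁, π.count (c, n + 1) =
        ∑ v ∈ V.toFinset.filter (fun v => v.2 = n + 1), π.count v := by
      rw [hS₁, Finset.sum_image
        (fun x hx y hy hxy => Prod.ext hxy
          (((Finset.mem_filter.mp hx).2).trans ((Finset.mem_filter.mp hy).2).symm))]
      apply Finset.sum_congr rfl
      intro v hv
      have hv2 : v.2 = n + 1 := (Finset.mem_filter.mp hv).2
      congr 1
      exact Prod.ext rfl hv2.symm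
    have e6 : ∑ c ∈ S₂, π.count (c, n) =
        ∑ v ∈ V.toFinset.filter (fun v => v.2 = n), π.count v := by
      rw [hS₂, Finset.sum_image
        (fun x hx y hy hxy => Prod.ext hxy
          (((Finset.mem_filter.mp hx).2).trans ((Finset.mem_filter.mp hy).2).symm))]
      apply Finset.sum_congr rfl
      intro v hv
      have hv2 : v.2 = n := (Finset.mem_filter.mp hv).2
      congr 1
      exact Prod.ext rfl hv2.symm
    rw [e4] at e3
    omega
  by_cases hcl : L₁ ≠ [] ∧ L₂p ≠ [] ∧ L₁.getLast? = L₂p.head?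
  · obtain ⟨hne₁, hne₂, heq⟩ := hcl
    have hgl : L₁.getLast? = some (L₁.getLast hne₁) := List.getLast?_eq_getLast hne₁
    have hhd : L₂p.head? = some (L₂p.head hne₂) := List.head?_eq_head hne₂
    set g := L₁.getLast hne₁ with hg
    set h := L₂p.head hne₂ with hh
    have hgmem : g ∈ S₁ := (Finset.mem_sort rkey).mp (List.getLast_mem hne₁)
    have hhmem : h ∈ S₂ := (Finset.mem_sort rkey).mp (List.head_mem hne₂)
    have hgh : g = h := by rw [hgl, hhd] at heq; exact Option.some.inj heq
    have hcr := hcross g hgmem h hhmem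
    rw [← hgh] at hcr
    have hγg := hγ₁ g hgmem
    unfold inGamma at hγg
    have hga : g.1 = g.2 := by omega
    have hglt : g.1 < (ℓ:ℤ) := by
      rcases hcr with ⟨-, hcr2⟩
      by_contra hcc
      exact hcr2 (by omega)
    set ph : Color := (g.1, g.1 + 1) with hph
    have hd₂ : DiagPath ℓ (ph :: L₂p) := by
      constructor
      · intro c hc
        rcases List.mem_cons.mp hc with rfl | hc
        · exact ⟨hγg.1, show (g.1:ℤ) ≤ g.1 + 1 by omega, show g.1 + 1 ≤ (ℓ:ℤ) by omega⟩
        · exact hd₂p.1 c hc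
      · show List.IsChain _ (ph :: L₂p)
        rw [List.isChain_cons]
        refine ⟨?_, hd₂p.2⟩
        intro y hy
        rw [hhd] at hy
        have hy' : y = h := (Option.mem_some_iff.mp hy).symm
        subst hy'
        refine ⟨?_, ?_, ?_⟩
        · show ph.1 ≤ h.1; rw [← hgh]
        · show h.2 ≤ ph.2; rw [← hgh]; exact show g.2 ≤ g.1 + 1 by omega
        · rw [hph, ← hgh]
          intro hcc
          have := congrArg Prod.snd hcc
          simp at this
          omega
    have happ := hDC n L₁ (ph :: L₂p) hd₁ hd₂ ?_ ?_
    · rw [List.map_cons, List.sum_cons, hsum₁, hsum₂] at happ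
      omega
    · intro c₁ hc₁ c₂ hc₂
      have hc₂' : c₂ = ph := by
        simp only [List.head?_cons, Option.mem_some_iff] at hc₂
        exact hc₂.symm
      subst hc₂'
      have hc₁m : c₁ ∈ S₁ := (Finset.mem_sort rkey).mp (List.mem_of_mem_head? hc₁)
      have := (hcross c₁ hc₁m h hhmem).1
      show c₁.2 ≤ ph.1
      rw [hph, hgh]
      simpa using this
    · intro c₁ hc₁ c₂ hc₂
      have hc₂' : c₂ = ph := by
        simp only [List.head?_cons, Option.mem_some_iff] at hc₂
        exact hc₂.symm
      subst hc₂'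
      rw [hgl] at hc₁
      have hc₁' : c₁ = g := (Option.mem_some_iff.mp hc₁).symm
      subst hc₁'
      intro hcc
      have := congrArg Prod.snd hcc
      rw [hph] at this
      simp at this
      omega
  · push_neg at hcl
    have happ := hDC n L₁ L₂p hd₁ hd₂p ?_ ?_
    · rw [hsum₁, hsum₂] at happ
      omega
    · intro c₁ hc₁ c₂ hc₂
      have hc₁m : c₁ ∈ S₁ := (Finset.mem_sort rkey).mp (List.mem_of_mem_head? hc₁)
      have hc₂m : c₂ ∈ S₂ := (Finset.mem_sort rkey).mp (List.mem_of_mem_head? hc₂)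
      exact (hcross c₁ hc₁m c₂ hc₂m).1
    · intro c₁ hc₁ c₂ hc₂
      have hne₁ : L₁ ≠ [] := by
        intro hcc; rw [hcc] at hc₁; simp at hc₁
      have hne₂ : L₂p ≠ [] := by
        intro hcc; rw [hcc] at hc₂; simp at hc₂
      have hneq := hcl hne₁ hne₂
      intro hcc
      subst hcc
      rw [Option.mem_def] at hc₁ hc₂
      rw [hc₁, hc₂] at hneq
      exact hneq rfl

section Dilworth

variable {α : Type*} [DecidableEq α] {r : α → α → Prop}

def IsChn (r : α → α → Prop) (C : Finset α) : Prop :=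
  ∀ a ∈ C, ∀ b ∈ C, a ≠ b → r a b ∨ r b a

def IsAnt (r : α → α → Prop) (A : Finset α) : Prop :=
  ∀ a ∈ A, ∀ b ∈ A, a ≠ b → ¬ r a b ∧ ¬ r b a

lemma exists_max_rel (htr : Transitive r) (hirr : Irreflexive r) {S : Finset α}
    (hS : S.Nonempty) : ∃ a ∈ S, ∀ b ∈ S, ¬ r a b := by
  classical
  obtain ⟨a, ha, hmin⟩ := S.exists_min_image (fun x => (S.filter (fun y => r x y)).card) hS
  refine ⟨a, ha, fun b hb hr => ?_⟩
  have hsub : S.filter (fun y => r b y) ⊂ S.filter (fun y => r a y) := by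
    constructor
    · intro x hx
      rw [Finset.mem_filter] at hx ⊢
      exact ⟨hx.1, htr hr hx.2⟩
    · intro hsub'
      have hbmem : b ∈ S.filter (fun y => r a y) := Finset.mem_filter.mpr ⟨hb, hr⟩
      have := hsub' hbmem
      rw [Finset.mem_filter] at this
      exact hirr b this.2
  exact absurd (hmin b hb) (not_le.mpr (Finset.card_lt_card hsub))

lemma chain_inter_antichain (htr : Transitive r) {C A : Finset α}
    (hC : IsChn r C) (hA : IsAnt r A) : (A ∩ C).card ≤ 1 := by
  classical
  rw [Finset.card_le_one]
  intro a ha b hb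
  rw [Finset.mem_inter] at ha hb
  by_contra hne
  rcases hC a ha.2 b hb.2 hne with h | h
  · exact (hA a ha.1 b hb.1 hne).1 h
  · exact (hA a ha.1 b hb.1 hne).2 h

lemma dilworth (htr : Transitive r) (hirr : Irreflexive r) :
    ∀ (N : ℕ) (S : Finset α), S.card ≤ N → ∀ k : ℕ,
      (∀ A ⊆ S, IsAnt r A → A.card ≤ k) →
      ∃ C : Fin k → Finset α, (∀ j, C j ⊆ S ∧ IsChn r (C j)) ∧ ∀ a ∈ S, ∃ j, a ∈ C j := by
  classical
  intro N
  induction N with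
  | zero =>
    intro S hS k _
    have hSe : S = ∅ := Finset.card_eq_zero.mp (Nat.le_zero.mp hS)
    exact ⟨fun _ => ∅, fun j => ⟨Finset.empty_subset _, fun a ha => absurd ha (Finset.notMem_empty a)⟩,
      by simp [hSe]⟩
  | succ N ih =>
    intro S hS k hw
    rcases S.eq_empty_or_nonempty with rfl | hne
    · exact ⟨fun _ => ∅, fun j => ⟨Finset.empty_subset _, fun a ha => absurd ha (Finset.notMem_empty a)⟩,
        by simp⟩
    obtain ⟨a, haS, hamax⟩ := exists_max_rel htr hirr hne
    rcases k with _ | m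
    · exfalso
      have h1 := hw {a} (Finset.singleton_subset_iff.mpr haS)
        (fun x hx y hy hxy => absurd (by
          rw [Finset.mem_singleton] at hx hy; rw [hx, hy]) hxy)
      simp at h1
    set S' := S.erase a with hS'
    have hS'card : S'.card ≤ N := by
      have h1 : S'.card = S.card - 1 := by rw [hS']; exact Finset.card_erase_of_mem haS
      have hpos : 1 ≤ S.card := Finset.card_pos.mpr hne
      omega
    by_cases hcase : ∀ A ⊆ S', IsAnt r A → A.card ≤ m
    · obtain ⟨D, hD, hDcov⟩ := ih S' hS'card m hcase
      refine ⟨Fin.cons {a} D, ?_, ?_⟩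
      · intro j
        refine Fin.cases ?_ ?_ j
        · simp only [Fin.cons_zero]
          exact ⟨Finset.singleton_subset_iff.mpr haS,
            fun x hx y hy hxy => absurd (by
              rw [Finset.mem_singleton] at hx hy; rw [hx, hy]) hxy⟩
        · intro i
          simp only [Fin.cons_succ]
          exact ⟨(hD i).1.trans (Finset.erase_subset _ _), (hD i).2⟩
      · intro x hx
        by_cases hxa : x = a
        · exact ⟨0, by simp [Fin.cons_zero, hxa]⟩
        · obtain ⟨j, hj⟩ := hDcov x (Finset.mem_erase.mpr ⟨hxa, hx⟩)
          exact ⟨j.succ, by simpa [Fin.cons_succ] using hj⟩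
    · push_neg at hcase
      obtain ⟨A₀, hA₀S, hA₀ant, hA₀card⟩ := hcase
      have hA₀k : A₀.card = m + 1 :=
        le_antisymm (hw A₀ (hA₀S.trans (Finset.erase_subset _ _)) hA₀ant) hA₀card
      -- chains covering S'
      obtain ⟨C, hC, hCcov⟩ := ih S' hS'card (m + 1)
        (fun A hA hAant => hw A (hA.trans (Finset.erase_subset _ _)) hAant)
      -- disjointify
      set C' : Fin (m + 1) → Finset α :=
        fun j => (C j) \ ((Finset.univ.filter (fun i => i < j)).biUnion C) with hC'
      have hC'sub : ∀ j, C' j ⊆ C j := fun j => Finset.sdiff_subset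
      have hC'chain : ∀ j, IsChn r (C' j) := fun j x hx y hy hxy =>
        (hC j).2 x (hC'sub j hx) y (hC'sub j hy) hxy
      have hC'S : ∀ j, C' j ⊆ S' := fun j => (hC'sub j).trans (hC j).1
      have hC'cov : ∀ x ∈ S', ∃ j, x ∈ C' j := by
        intro x hx
        obtain ⟨j, hj⟩ := hCcov x hx
        have hT : (Finset.univ.filter (fun i => x ∈ C i)).Nonempty :=
          ⟨j, Finset.mem_filter.mpr ⟨Finset.mem_univ _, hj⟩⟩
        set j₀ := (Finset.univ.filter (fun i => x ∈ C i)).min' hT with hj₀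
        have hj₀mem := (Finset.univ.filter (fun i => x ∈ C i)).min'_mem hT
        rw [Finset.mem_filter] at hj₀mem
        refine ⟨j₀, Finset.mem_sdiff.mpr ⟨hj₀mem.2, ?_⟩⟩
        intro hcc
        rw [Finset.mem_biUnion] at hcc
        obtain ⟨i, hi, hxi⟩ := hcc
        rw [Finset.mem_filter] at hi
        have hile := Finset.min'_le (Finset.univ.filter (fun i => x ∈ C i)) i
          (Finset.mem_filter.mpr ⟨Finset.mem_univ _, hxi⟩)
        rw [← hj₀] at hile
        exact absurd hile (not_le.mpr hi.2)
      have hC'disj : ∀ i j, i ≠ j → ∀ x, x ∈ C' i → x ∈ C' j → False := by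
        intro i j hij x hxi hxj
        rcases lt_or_gt_of_ne hij with h | h
        · rw [hC', Finset.mem_sdiff] at hxj
          exact hxj.2 (Finset.mem_biUnion.mpr ⟨i, Finset.mem_filter.mpr
            ⟨Finset.mem_univ _, h⟩, hC'sub i hxi⟩)
        · rw [hC', Finset.mem_sdiff] at hxi
          exact hxi.2 (Finset.mem_biUnion.mpr ⟨j, Finset.mem_filter.mpr
            ⟨Finset.mem_univ _, h⟩, hC'sub j hxj⟩)
      -- every (m+1)-antichain of S' meets every C' j
      have hmeet : ∀ A ⊆ S', IsAnt r A → A.card = m + 1 → ∀ j, (A ∩ C' j).Nonempty := by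
        intro A hAS hAant hAcard j
        rw [Finset.nonempty_iff_ne_empty]
        intro hempty
        have hsub : A ⊆ (Finset.univ.erase j).biUnion (fun i => A ∩ C' i) := by
          intro x hxA
          obtain ⟨i, hi⟩ := hC'cov x (hAS hxA)
          have hij : i ≠ j := by
            intro hcc; subst hcc
            have : x ∈ A ∩ C' i := Finset.mem_inter.mpr ⟨hxA, hi⟩
            rw [hempty] at this
            exact absurd this (Finset.notMem_empty x)
          exact Finset.mem_biUnion.mpr ⟨i, Finset.mem_erase.mpr ⟨hij, Finset.mem_univ _⟩,
            Finset.mem_inter.mpr ⟨hxA, hi⟩⟩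
        have hcard1 := Finset.card_le_card hsub
        have hcard2 := Finset.card_biUnion_le (s := Finset.univ.erase j) (t := fun i => A ∩ C' i)
        have hcard3 : ∑ i ∈ Finset.univ.erase j, (A ∩ C' i).card ≤
            ∑ i ∈ Finset.univ.erase j, 1 :=
          Finset.sum_le_sum (fun i _ => chain_inter_antichain htr (hC'chain i) hAant)
        rw [Finset.sum_const, smul_eq_mul, mul_one] at hcard3
        have hcard4 : (Finset.univ.erase j).card = m := by
          rw [Finset.card_erase_of_mem (Finset.mem_univ _), Finset.card_univ, Fintype.card_fin]
          omega
        omega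
      -- top antichain elements in each chain
      have hTne : ∀ j, ((C' j).filter (fun x => ∃ A, A ⊆ S' ∧ IsAnt r A ∧ A.card = m + 1 ∧ x ∈ A)).Nonempty := by
        intro j
        obtain ⟨x, hx⟩ := hmeet A₀ hA₀S hA₀ant hA₀k j
        rw [Finset.mem_inter] at hx
        exact ⟨x, Finset.mem_filter.mpr ⟨hx.2, A₀, hA₀S, hA₀ant, hA₀k, hx.1⟩⟩
      have haj : ∀ j : Fin (m + 1), ∃ aj, aj ∈ (C' j).filter
          (fun x => ∃ A, A ⊆ S' ∧ IsAnt r A ∧ A.card = m + 1 ∧ x ∈ A) ∧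
          ∀ b ∈ (C' j).filter (fun x => ∃ A, A ⊆ S' ∧ IsAnt r A ∧ A.card = m + 1 ∧ x ∈ A),
            ¬ r aj b := by
        intro j
        obtain ⟨aj, h1, h2⟩ := exists_max_rel htr hirr (hTne j)
        exact ⟨aj, h1, h2⟩
      choose aj hajmem hajmax using haj
      -- every element of an (m+1)-antichain within C' j is ≤ aj
      have hbelow : ∀ j, ∀ A, A ⊆ S' → IsAnt r A → A.card = m + 1 →
          ∀ x, x ∈ A → x ∈ C' j → x = aj j ∨ r x (aj j) := by
        intro j A hAS hAant hAcard x hxA hxC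
        have hxT : x ∈ (C' j).filter (fun x => ∃ A, A ⊆ S' ∧ IsAnt r A ∧ A.card = m + 1 ∧ x ∈ A) :=
          Finset.mem_filter.mpr ⟨hxC, A, hAS, hAant, hAcard, hxA⟩
        by_cases hxa : x = aj j
        · exact Or.inl hxa
        · have hajC : aj j ∈ C' j := (Finset.mem_filter.mp (hajmem j)).1
          rcases hC'chain j x hxC (aj j) hajC hxa with h | h
          · exact Or.inr h
          · exact absurd h (hajmax j x hxT)
      -- the aj's form an antichain
      have hajS' : ∀ j, aj j ∈ S' := fun j => hC'S j (Finset.mem_filter.mp (hajmem j)).1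
      have hajant : ∀ i j, i ≠ j → ¬ r (aj i) (aj j) := by
        intro i j hij hr
        obtain ⟨A, hAS, hAant, hAcard, hajA⟩ := (Finset.mem_filter.mp (hajmem j)).2
        obtain ⟨x, hx⟩ := hmeet A hAS hAant hAcard i
        rw [Finset.mem_inter] at hx
        have hxr : r x (aj j) := by
          rcases hbelow i A hAS hAant hAcard x hx.1 hx.2 with rfl | h
          · exact hr
          · exact htr h hr
        have hxne : x ≠ aj j := fun hcc => hirr _ (hcc ▸ hxr)
        exact (hAant x hx.1 (aj j) hajA hxne).1 hxr
      -- either a is above some aj, or contradiction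
      have hex : ∃ j, r (aj j) a := by
        by_contra hcc
        push_neg at hcc
        set B := insert a (Finset.univ.image aj) with hB
        have hajinj : Function.Injective aj := by
          intro i j hij
          by_contra hne'
          exact hC'disj i j hne' (aj i) (Finset.mem_filter.mp (hajmem i)).1
            (hij ▸ (Finset.mem_filter.mp (hajmem j)).1)
        have hanotin : a ∉ Finset.univ.image aj := by
          rw [Finset.mem_image]
          rintro ⟨j, -, hj⟩
          exact (Finset.mem_erase.mp (hajS' j)).1 hj
        have hBcard : B.card = m + 2 := by
          rw [hB, Finset.card_insert_of_notMem hanotin, Finset.card_image_of_injective _ hajinj,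
            Finset.card_univ, Fintype.card_fin]
        have hBS : B ⊆ S := by
          intro x hx
          rw [hB, Finset.mem_insert] at hx
          rcases hx with rfl | hx
          · exact haS
          · rw [Finset.mem_image] at hx
            obtain ⟨j, -, rfl⟩ := hx
            exact Finset.erase_subset _ _ (hajS' j)
        have hBant : IsAnt r B := by
          intro x hx y hy hxy
          rw [hB, Finset.mem_insert, Finset.mem_image] at hx hy
          rcases hx with rfl | ⟨i, -, rfl⟩
          · rcases hy with rfl | ⟨j, -, rfl⟩
            · exact absurd rfl hxy
            · exact ⟨hamax _ (Finset.erase_subset _ _ (hajS' j)), hcc j⟩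
          · rcases hy with rfl | ⟨j, -, rfl⟩
            · exact ⟨hcc i, hamax _ (Finset.erase_subset _ _ (hajS' i))⟩
            · have hij : i ≠ j := fun hcc' => hxy (hcc' ▸ rfl)
              exact ⟨hajant i j hij, hajant j i hij.symm⟩
        have := hw B hBS hBant
        omega
      obtain ⟨j, hjr⟩ := hex
      set Cnew := insert a ((C' j).filter (fun x => x = aj j ∨ r x (aj j))) with hCnew
      have hCnewchain : IsChn r Cnew := by
        intro x hx y hy hxy
        rw [hCnew, Finset.mem_insert] at hx hy
        rcases hx with rfl | hx
        · rcases hy with rfl | hy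
          · exact absurd rfl hxy
          · right
            rw [Finset.mem_filter] at hy
            rcases hy.2 with rfl | h
            · exact hjr
            · exact htr h hjr
        · rcases hy with rfl | hy
          · left
            rw [Finset.mem_filter] at hx
            rcases hx.2 with rfl | h
            · exact hjr
            · exact htr h hjr
          · rw [Finset.mem_filter] at hx hy
            exact hC'chain j x hx.1 y hy.1 hxy
      have hCnewS : Cnew ⊆ S := by
        intro x hx
        rw [hCnew, Finset.mem_insert] at hx
        rcases hx with rfl | hx
        · exact haS
        · rw [Finset.mem_filter] at hx
          exact Finset.erase_subset _ _ (hC'S j hx.1)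
      set Srest := S \ Cnew with hSrest
      have hSrestS' : Srest ⊆ S' := by
        intro x hx
        rw [hSrest, Finset.mem_sdiff] at hx
        refine Finset.mem_erase.mpr ⟨?_, hx.1⟩
        intro hcc
        exact hx.2 (hcc ▸ Finset.mem_insert_self _ _)
      have hSrestcard : Srest.card ≤ N := le_trans (Finset.card_le_card hSrestS') hS'card
      have hSrestw : ∀ A ⊆ Srest, IsAnt r A → A.card ≤ m := by
        intro A hAS hAant
        have h1 : A.card ≤ m + 1 := hw A (hAS.trans (Finset.sdiff_subset)) hAant
        rcases Nat.lt_or_ge A.card (m + 1) with h | h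
        · omega
        · exfalso
          have hAcard : A.card = m + 1 := by omega
          have hAS' : A ⊆ S' := hAS.trans hSrestS'
          obtain ⟨x, hx⟩ := hmeet A hAS' hAant hAcard j
          rw [Finset.mem_inter] at hx
          have := hbelow j A hAS' hAant hAcard x hx.1 hx.2
          have hxCnew : x ∈ Cnew := by
            rw [hCnew]
            exact Finset.mem_insert_of_mem (Finset.mem_filter.mpr ⟨hx.2, this⟩)
          have := hAS hx.1
          rw [hSrest, Finset.mem_sdiff] at this
          exact this.2 hxCnew
      obtain ⟨D, hD, hDcov⟩ := ih Srest hSrestcard m hSrestw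
      refine ⟨Fin.cons Cnew D, ?_, ?_⟩
      · intro i
        refine Fin.cases ?_ ?_ i
        · simp only [Fin.cons_zero]
          exact ⟨hCnewS, hCnewchain⟩
        · intro i
          simp only [Fin.cons_succ]
          exact ⟨(hD i).1.trans (Finset.sdiff_subset), (hD i).2⟩
      · intro x hx
        by_cases hxC : x ∈ Cnew
        · exact ⟨0, by simpa [Fin.cons_zero] using hxC⟩
        · obtain ⟨i, hi⟩ := hDcov x (Finset.mem_sdiff.mpr ⟨hx, hxC⟩)
          exact ⟨i.succ, by simpa [Fin.cons_succ] using hi⟩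


end Dilworth

lemma R_trans' (ℓ : ℕ) : Transitive (R ℓ) := by
  intro v w u h1 h2
  unfold R at *
  omega

lemma R_irrefl' (ℓ : ℕ) : Irreflexive (R ℓ) := by
  intro v h; unfold R at h; omega

lemma list_sum_fin {k : ℕ} (L : List Color) (g : Color → Fin k → ℕ) :
    (L.map (fun c => ∑ j, g c j)).sum = ∑ j, (L.map (fun c => g c j)).sum := by
  induction L with
  | nil => simp
  | cons a t ih => simp [ih, Finset.sum_add_distrib]

/-- A monomial `π` satisfies the level-`k` difference conditions if and only
if it can be written as a multiset sum `π = π⁽¹⁾ + ⋯ + π⁽ᵏ⁾` where each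
`π⁽ʲ⁾` satisfies the level-1 difference conditions. -/
theorem stmt13 (ℓ k : ℕ) (hk : 1 ≤ k) (π : Multiset Var)
    (hπ : ∀ v ∈ π, inVars ℓ v) :
    DC ℓ k π ↔
      ∃ f : Fin k → Multiset Var, π = ∑ j, f j ∧ ∀ j, DC ℓ 1 (f j) := by
  classical
  constructor
  · intro hDC
    set l := π.toList with hl
    set N := l.length with hN
    set val : Fin N → Var := l.get with hval
    set r : Fin N → Fin N → Prop := fun p q => R ℓ (val p) (val q) with hrr
    have rtrans : Transitive r := fun p q u h1 h2 => R_trans' ℓ h1 h2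
    have rirr : Irreflexive r := fun p h => R_irrefl' ℓ _ h
    have huniv : Multiset.map val Finset.univ.val = π := by
      rw [Fin.univ_val_map, hval, List.ofFn_get, hl]
      exact π.coe_toList
    have hbound : ∀ A ⊆ (Finset.univ : Finset (Fin N)), IsAnt r A → A.card ≤ k := by
      intro A _ hA
      have hVle : Multiset.map val A.val ≤ π := by
        rw [← huniv]
        exact Multiset.map_le_map (Finset.val_le_iff.mpr (Finset.subset_univ A))
      have hanti : ∀ v ∈ Multiset.map val A.val, ∀ w ∈ Multiset.map val A.val, v ≠ w →
          ¬ R ℓ v w ∧ ¬ R ℓ w v := by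
        intro v hv w hw hvw
        obtain ⟨p, hp, rfl⟩ := Multiset.mem_map.mp hv
        obtain ⟨q, hq, rfl⟩ := Multiset.mem_map.mp hw
        have hpq : p ≠ q := fun h => hvw (h ▸ rfl)
        exact hA p hp q hq hpq
      have := antichain_card_le ℓ k π hDC hπ _ hVle hanti
      simpa using this
    obtain ⟨C, hC, hcov⟩ := dilworth rtrans rirr N Finset.univ (by simp) k hbound
    have hcov' : ∀ p : Fin N, ∃ j, p ∈ C j := fun p => hcov p (Finset.mem_univ p)
    set g : Fin N → Fin k := fun p => (hcov' p).choose with hgdef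
    have hgmem : ∀ p, p ∈ C (g p) := fun p => (hcov' p).choose_spec
    have hfib : ∀ p, ∀ j, g p = j → p ∈ C j := fun p j h => h ▸ hgmem p
    set f : Fin k → Multiset Var :=
      fun j => Multiset.map val (Finset.univ.filter (fun p => g p = j)).val with hfdef
    have ecount : ∀ (v : Var) (s : Finset (Fin N)),
        Multiset.count v (Multiset.map val s.val) = ∑ p ∈ s, (if v = val p then 1 else 0) := by
      intro v s
      rw [Multiset.count_map, ← Finset.filter_val]
      show (Finset.filter (fun a => v = val a) s).card = _
      rw [Finset.card_filter]
    refine ⟨f, ?_, ?_⟩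
    · ext v
      rw [Multiset.count_sum']
      have e1 : ∀ j, (f j).count v =
          ∑ p ∈ Finset.univ.filter (fun p => g p = j), (if v = val p then 1 else 0) :=
        fun j => ecount v _
      have e2 : Multiset.count v π = ∑ p ∈ (Finset.univ : Finset (Fin N)),
          (if v = val p then 1 else 0) := by
        rw [← huniv]; exact ecount v _
      rw [e2]
      rw [Finset.sum_congr rfl (fun j _ => e1 j)]
      exact (Finset.sum_fiberwise Finset.univ g (fun p => if v = val p then 1 else 0)).symm
    · intro j
      apply chain_DC1
      · intro v
        have := ecount v (Finset.univ.filter (fun p => g p = j))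
        rw [hfdef]
        show Multiset.count v (Multiset.map val (Finset.univ.filter (fun p => g p = j)).val) ≤ 1
        rw [Multiset.count_map, ← Finset.filter_val]
        show (Finset.filter (fun a => v = val a) _).card ≤ 1
        rw [Finset.card_le_one]
        intro p hp q hq
        by_contra hne
        rw [Finset.mem_filter, Finset.mem_filter] at hp hq
        have hpj : p ∈ C j := hfib p j hp.1.2
        have hqj : q ∈ C j := hfib q j hq.1.2
        have hval_eq : val p = val q := hp.2.symm.trans hq.2
        rcases (hC j).2 p hpj q hqj hne with h | h
        · exact R_irrefl' ℓ (val p) (by rw [hrr] at h; rw [hval_eq]; exact hval_eq ▸ h)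
        · exact R_irrefl' ℓ (val p) (by rw [hrr] at h; rw [hval_eq]; exact hval_eq ▸ h)
      · intro v hv w hw hvw
        rw [hfdef] at hv hw
        obtain ⟨p, hp, rfl⟩ := Multiset.mem_map.mp hv
        obtain ⟨q, hq, rfl⟩ := Multiset.mem_map.mp hw
        rw [Finset.mem_val, Finset.mem_filter] at hp hq
        have hpj : p ∈ C j := hfib p j hp.2
        have hqj : q ∈ C j := hfib q j hq.2
        have hne : p ≠ q := fun h => hvw (h ▸ rfl)
        exact (hC j).2 p hpj q hqj hne
  · rintro ⟨f, hsum, hDC1⟩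
    intro n L₁ L₂ hd₁ hd₂ hh hlst
    have hcnt : ∀ v : Var, π.count v = ∑ j, (f j).count v := by
      intro v; rw [hsum]; exact Multiset.count_sum'
    have e1 : (L₁.map (fun c => π.count (c, n + 1))).sum =
        ∑ j, (L₁.map (fun c => (f j).count (c, n + 1))).sum := by
      rw [show (fun c => π.count (c, n + 1)) = fun c => ∑ j, (f j).count (c, n + 1) from
        funext (fun c => hcnt (c, n + 1))]
      exact list_sum_fin L₁ _
    have e2 : (L₂.map (fun c => π.count (c, n))).sum =
        ∑ j, (L₂.map (fun c => (f j).count (c, n))).sum := by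
      rw [show (fun c => π.count (c, n)) = fun c => ∑ j, (f j).count (c, n) from
        funext (fun c => hcnt (c, n))]
      exact list_sum_fin L₂ _
    rw [e1, e2, ← Finset.sum_add_distrib]
    calc ∑ j, ((L₁.map (fun c => (f j).count (c, n + 1))).sum +
          (L₂.map (fun c => (f j).count (c, n))).sum)
        ≤ ∑ _j : Fin k, 1 :=
          Finset.sum_le_sum (fun j _ => hDC1 j n L₁ L₂ hd₁ hd₂ hh hlst)
      _ = k := by simp
end

section
/- Equivalence of the two definitions of initial conditions for fundamental weights: let 0 ≤ r ≤ ℓ and let π be a monomial satisfying level-1 difference conditions. Then π satisfies initial conditions for Λ_r in the general sense (with k_r = 1 and k_s = 0 for s ≠ r) if and only if π contains no variable x_{ij}(−1) with i ≤ j ≤ r. -/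
/-- Equivalence of the two definitions of initial conditions for fundamental
weights: for `0 ≤ r ≤ ℓ` and a monomial `π` satisfying the level-1 difference
conditions, `π` satisfies the initial conditions for `Λ_r` in the general
sense (with `k_r = 1` and `k_s = 0` for `s ≠ r`) if and only if `π` contains
no variable `x_{ij}(−1)` with `i ≤ j ≤ r`. -/
theorem stmt14 (ℓ r : ℕ) (hr : r ≤ ℓ) (π : Multiset Var)
    (hπ : ∀ v ∈ π, inVars ℓ v) (hDC : DC ℓ 1 π) :
    IC ℓ (fun s => if s = r then 1 else 0) π ↔
      ∀ c : Color, c.2 ≤ (r : ℤ) → ((c, (1 : ℤ)) : Var) ∉ π := by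

  have hsum : ∀ c : Color, (∑ s ∈ Finset.range c.2.toNat, (if s = r then 1 else 0)) =
      if r < c.2.toNat then 1 else 0 := by
    intro c
    simp [Finset.sum_ite_eq']
  constructor
  · intro hIC c hc hmem
    have hΓ : inGamma ℓ c := hπ (c, 1) hmem
    have hpath : DiagPath ℓ [c] := ⟨by simpa using hΓ, List.isChain_singleton _⟩
    have h := hIC [c] hpath c (by simp)
    rw [hsum] at h
    have hnot : ¬ r < c.2.toNat := by
      have : c.2.toNat ≤ r := Int.toNat_le.mpr hc
      omega
    rw [if_neg hnot] at h
    simp [Multiset.count_eq_zero] at h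
    exact h hmem
  · intro h L hL c hc
    have hc' : L.head? = some c := hc
    rw [hsum]
    by_cases hcase : (r : ℤ) < c.2
    · have hrt : r < c.2.toNat := Int.lt_toNat.mpr hcase
      have hdc := hDC 1 [] L ⟨by simp, List.isChain_nil⟩ hL (by simp) (by simp)
      simpa [hrt] using hdc
    · push_neg at hcase
      have hrt : ¬ r < c.2.toNat := by rw [Int.lt_toNat]; omega
      simp only [hrt, if_false]
      obtain ⟨tl, rfl⟩ : ∃ tl, L = c :: tl := by
        cases L with
        | nil => simp at hc'
        | cons a tl =>
          exact ⟨tl, by simp at hc'; rw [hc']⟩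
      haveI : IsTrans Color (fun a b : Color => b.2 ≤ a.2) :=
        ⟨fun _ _ _ h1 h2 => le_trans h2 h1⟩
      have hle : ∀ c' ∈ c :: tl, c'.2 ≤ c.2 := by
        have hch : (c :: tl).Chain' (fun a b : Color => b.2 ≤ a.2) :=
          hL.2.imp (fun a b hab => hab.2.1)
        have hp := List.isChain_iff_pairwise.mp hch
        intro c' hc'mem
        rcases List.mem_cons.mp hc'mem with rfl | hmem
        · exact le_refl _
        · exact (List.pairwise_cons.mp hp).1 c' hmem
      have : ∀ x ∈ ((c :: tl).map (fun c' => π.count (c', (1:ℤ)))), x = 0 := by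
        intro x hx
        obtain ⟨c', hc'mem, rfl⟩ := List.mem_map.mp hx
        exact Multiset.count_eq_zero.mpr (h c' (le_trans (hle c' hc'mem) hcase))
      rw [List.sum_eq_zero this]
end
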